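/- Let $F_\square \in \mathbb{R}^{3\times 3}$ be invertible with $\det F_\square > 0$, let $N \in \mathbb{R}^3$ be nonzero, let $c_+, c_- > 0$ with $c_+ + c_- = 1$, and let $a \in \mathbb{R}^3$. Set $m = F_\square^{-\mathsf T} N / \lVert F_\square^{-\mathsf T} N \rVert$, $\beta_+ = -c_+ / \lVert F_\square^{-\mathsf T} N \rVert$ and $\beta_- = c_- / \lVert F_\square^{-\mathsf T} N \rVert$. Then the two phase-wise Jacobians are positive, i.e. $\det\big(F_\square + \tfrac{1}{c_+} a N^{\mathsf T}\big) > 0$ and $\det\big(F_\square - \tfrac{1}{c_-} a N^{\mathsf T}\big) > 0$, if and only if $\beta_+ < a \cdot m < \beta_-$. -/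

import Mathlib

open Matrix

/-- Positivity of both phase-wise Jacobians `det F± > 0` of the laminate in a
composite boxel is equivalent to the gradient jump vector `a` satisfying
`β₊ < a ⋅ m < β₋`, where `m = F□⁻ᵀ N / ‖F□⁻ᵀ N‖`, `β₊ = -c₊/‖F□⁻ᵀ N‖` and
`β₋ = c₋/‖F□⁻ᵀ N‖`. -/
lemma det_key (F : Matrix (Fin 3) (Fin 3) ℝ) (hF : IsUnit F.det)
    (a N : Fin 3 → ℝ) (t : ℝ) :
    (F + t • vecMulVec a N).det = F.det * (1 + t * (((F⁻¹)ᵀ *ᵥ N) ⬝ᵥ a)) := by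
  have h1 : t • vecMulVec a N = vecMulVec (t • a) N := by
    ext i j; simp [vecMulVec_apply]; ring
  rw [h1, vecMulVec_eq Unit, det_add_replicateCol_mul_replicateRow hF]
  congr 1
  rw [det_unique, ← Matrix.replicateRow_vecMul, Matrix.add_apply,
    Matrix.one_apply_eq, Matrix.replicateRow_mul_replicateCol_apply, Matrix.mulVec_transpose,
    dotProduct_smul, dotProduct_comm]
  simp [smul_eq_mul]

theorem jacobian_positivity_iff_admissible
    (F : Matrix (Fin 3) (Fin 3) ℝ) (hF : IsUnit F.det) (hdet : 0 < F.det)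
    (N : Fin 3 → ℝ) (hN : N ≠ 0)
    (cp cm : ℝ) (hcp : 0 < cp) (hcm : 0 < cm) (hsum : cp + cm = 1)
    (a : Fin 3 → ℝ)
    (w : Fin 3 → ℝ) (hw : w = (F⁻¹)ᵀ *ᵥ N)
    (m : Fin 3 → ℝ) (hm : m = (Real.sqrt (w ⬝ᵥ w))⁻¹ • w)
    (βp βm : ℝ) (hβp : βp = -cp / Real.sqrt (w ⬝ᵥ w))
    (hβm : βm = cm / Real.sqrt (w ⬝ᵥ w)) :
    (0 < (F + cp⁻¹ • vecMulVec a N).det ∧ 0 < (F - cm⁻¹ • vecMulVec a N).det)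
      ↔ (βp < a ⬝ᵥ m ∧ a ⬝ᵥ m < βm) := by
  have hw0 : w ≠ 0 := by
    intro h
    apply hN
    have : Fᵀ *ᵥ w = N := by
      rw [hw, Matrix.mulVec_mulVec, ← Matrix.transpose_mul,
        Matrix.nonsing_inv_mul F hF, Matrix.transpose_one, Matrix.one_mulVec]
    rw [h, Matrix.mulVec_zero] at this
    exact this.symm
  have hww : 0 < w ⬝ᵥ w := by
    rcases lt_or_eq_of_le (Finset.sum_nonneg fun i _ => mul_self_nonneg (w i)) with h | h
    · exact h
    · exact absurd (dotProduct_self_eq_zero.mp h.symm) hw0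
  set s := Real.sqrt (w ⬝ᵥ w) with hs
  have hspos : 0 < s := Real.sqrt_pos.mpr hww
  have ham : a ⬝ᵥ m = (w ⬝ᵥ a) / s := by
    rw [hm, dotProduct_smul, smul_eq_mul, dotProduct_comm, div_eq_inv_mul]
  set x := w ⬝ᵥ a with hx
  have h1 : (F + cp⁻¹ • vecMulVec a N).det = F.det * (1 + cp⁻¹ * x) := by
    rw [det_key F hF a N, hx, hw]
  have h2 : (F - cm⁻¹ • vecMulVec a N).det = F.det * (1 + (-cm⁻¹) * x) := by
    rw [sub_eq_add_neg, ← neg_smul, det_key F hF a N, hx, hw]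
  rw [h1, h2, ham, hβp, hβm]
  rw [mul_pos_iff_of_pos_left, mul_pos_iff_of_pos_left,
    div_lt_div_iff_of_pos_right hspos, div_lt_div_iff_of_pos_right hspos]
  rotate_left
  · exact hdet
  · exact hdet
  have e1 : 1 + cp⁻¹ * x = (cp + x) / cp := by field_simp
  have e2 : 1 + -cm⁻¹ * x = (cm - x) / cm := by field_simp; ring
  rw [e1, e2, div_pos_iff_of_pos_right hcp, div_pos_iff_of_pos_right hcm]
  constructor <;> rintro ⟨hA, hB⟩ <;> constructor <;> linarith
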